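/- More generally, for the Cauchy kernel E on M \ {0} and any fixed element a ∈ A, the function x ↦ E(x)·a is left monogenic: ∂̄_B(E(x)a) = 0 for all x ≠ 0. -/

import Mathlib

private lemma sum_sum_antisymm' {M : Type*} [AddCommGroup M] [Module ℝ M]
    [NoZeroSMulDivisors ℝ M]
    {ι : Type*} [DecidableEq ι] (S : Finset ι) (f : ι → ι → M)
    (hanti : ∀ s ∈ S, ∀ t ∈ S, s ≠ t → f s t = - f t s) :
    ∑ s ∈ S, ∑ t ∈ S, f s t = ∑ s ∈ S, f s s := by
  have key : (2:ℝ) • (∑ s ∈ S, ∑ t ∈ S, f s t) = (2:ℝ) • ∑ s ∈ S, f s s := by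
    have hco : ∑ s ∈ S, ∑ t ∈ S, f s t = ∑ s ∈ S, ∑ t ∈ S, f t s := Finset.sum_comm
    calc (2:ℝ) • (∑ s ∈ S, ∑ t ∈ S, f s t)
        = (∑ s ∈ S, ∑ t ∈ S, f s t) + (∑ s ∈ S, ∑ t ∈ S, f t s) := by
          rw [two_smul]; nth_rewrite 2 [hco]; rfl
      _ = ∑ s ∈ S, ∑ t ∈ S, (f s t + f t s) := by
          rw [← Finset.sum_add_distrib]
          exact Finset.sum_congr rfl fun s _ => (Finset.sum_add_distrib).symm
      _ = ∑ s ∈ S, ∑ t ∈ S, (if t = s then (2:ℝ) • f s s else 0) := by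
          refine Finset.sum_congr rfl fun s hs => Finset.sum_congr rfl fun t ht => ?_
          by_cases h : t = s
          · subst h; rw [if_pos rfl, two_smul]
          · rw [if_neg h, hanti s hs t ht (Ne.symm h), neg_add_cancel]
      _ = (2:ℝ) • ∑ s ∈ S, f s s := by
          rw [Finset.smul_sum]
          refine Finset.sum_congr rfl fun s hs => ?_
          rw [Finset.sum_ite_eq' S s (fun _ => (2:ℝ) • f s s), if_pos hs]
  exact smul_right_injective M two_ne_zero key

theorem cauchy_kernel_mul_right_monogenic {A : Type*} [NormedAddCommGroup A]
    [NormedSpace ℝ A] [FiniteDimensional ℝ A]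
    (μ : A →L[ℝ] A →L[ℝ] A) (e : A)
    (he : ∀ a : A, μ e a = a ∧ μ a e = a)
    (hLA : ∀ a b : A, μ (μ a a) b = μ a (μ a b))
    (hRA : ∀ a b : A, μ (μ a b) b = μ a (μ b b))
    (m : ℕ) (hm : 1 ≤ m) (v : Fin (m + 1) → A)
    (hv0 : v 0 = e)
    (hvsq : ∀ s, s ≠ 0 → μ (v s) (v s) = -e)
    (hvanti : ∀ s t, s ≠ 0 → t ≠ 0 → s ≠ t → μ (v s) (v t) = -μ (v t) (v s))
    (σ : ℝ) (hσ : σ = 2 * Real.Gamma (1 / 2) ^ (m + 1) / Real.Gamma ((m + 1) / 2))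
    (E : ((Fin (m + 1)) → ℝ) → A)
    (hE : E = fun q => (σ * Real.sqrt (∑ s, q s ^ 2) ^ (m + 1))⁻¹ •
      (q 0 • e - ∑ s ∈ Finset.univ \ {0}, q s • v s))
    (a : A) (p : (Fin (m + 1)) → ℝ) (hp : p ≠ 0) :
    ∑ s, μ (v s) (fderiv ℝ (fun q => μ (E q) a) p (Pi.single s 1)) = 0 := by
  classical
  set S : Finset (Fin (m+1)) := Finset.univ \ {0} with hS
  have hmemS : ∀ s, s ∈ S ↔ s ≠ 0 := by
    intro s; simp [hS]
  -- positivity facts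
  have hσpos : 0 < σ := by
    have h1 : 0 < Real.Gamma (1/2) := Real.Gamma_pos_of_pos (by norm_num)
    have h2 : 0 < Real.Gamma ((m+1)/2) := Real.Gamma_pos_of_pos (by positivity)
    rw [hσ]; positivity
  have hnp : 0 < ∑ t, p t ^ 2 := by
    obtain ⟨i, hi⟩ := Function.ne_iff.1 hp
    exact Finset.sum_pos' (fun t _ => sq_nonneg _)
      ⟨i, Finset.mem_univ i, pow_two_pos_of_ne_zero hi⟩
  set n : (Fin (m+1) → ℝ) → ℝ := fun q => ∑ t, q t ^ 2 with hn
  set r : ℝ := Real.sqrt (n p) with hrdef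
  have hr : 0 < r := Real.sqrt_pos.2 hnp
  have hr2 : r ^ 2 = ∑ t, p t ^ 2 := Real.sq_sqrt hnp.le
  have hc : σ * r ^ (m+1) ≠ 0 := by positivity
  -- the continuous linear map G q = μ (q 0 • e - ∑ q s • v s) a
  set G : (Fin (m+1) → ℝ) →L[ℝ] A :=
    ((ContinuousLinearMap.proj (R := ℝ) (φ := fun _ : Fin (m+1) => ℝ) 0).smulRight a -
      ∑ s ∈ S, (ContinuousLinearMap.proj s).smulRight ((μ (v s)) a)) with hG
  have hGapp : ∀ q : Fin (m+1) → ℝ, G q = q 0 • a - ∑ t ∈ S, q t • μ (v t) a := by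
    intro q; simp [hG, ContinuousLinearMap.sum_apply]
  have hfun : (fun q => μ (E q) a)
      = fun q => (σ * Real.sqrt (n q) ^ (m+1))⁻¹ • G q := by
    funext q
    rw [hE, hGapp]
    simp [map_sub, map_smul, map_sum, ContinuousLinearMap.sub_apply,
      ContinuousLinearMap.smul_apply, ContinuousLinearMap.sum_apply, (he a).1]
    rfl
  -- derivative computation
  set P : Fin (m+1) → ((Fin (m+1) → ℝ) →L[ℝ] ℝ) :=
    fun t => ContinuousLinearMap.proj t with hP
  set N : (Fin (m+1) → ℝ) →L[ℝ] ℝ :=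
    ∑ t : Fin (m+1), (((2:ℕ):ℝ) * p t ^ (2-1)) • P t with hNdef
  have hN : HasFDerivAt n N p := by
    have := HasFDerivAt.fun_sum (u := Finset.univ) fun t _ =>
      (hasDerivAt_pow 2 (p t)).comp_hasFDerivAt p (P t).hasFDerivAt
    exact this
  have hR : HasFDerivAt (fun q => Real.sqrt (n q)) ((1 / (2 * r)) • N) p :=
    (Real.hasDerivAt_sqrt hnp.ne').comp_hasFDerivAt p hN
  have hRp : HasFDerivAt (fun q => Real.sqrt (n q) ^ (m+1))
      ((((m+1 : ℕ):ℝ) * r ^ (m+1-1)) • ((1 / (2 * r)) • N)) p :=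
    by have := (hasDerivAt_pow (m+1) r).comp_hasFDerivAt p hR; exact this
  have hC := hRp.const_mul σ
  have hCinv : HasFDerivAt (fun q => (σ * Real.sqrt (n q) ^ (m+1))⁻¹)
      (-(((σ * r^(m+1))^2)⁻¹) •
        (σ • ((((m+1:ℕ):ℝ) * r ^ (m+1-1)) • ((1 / (2 * r)) • N)))) p :=
    (hasDerivAt_inv hc).comp_hasFDerivAt p hC
  have hFd := hCinv.smul G.hasFDerivAt
  have hFE : HasFDerivAt (fun q => μ (E q) a)
      ((σ * Real.sqrt (n p) ^ (m+1))⁻¹ • G +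
        (-(((σ * r^(m+1))^2)⁻¹) •
          (σ • ((((m+1:ℕ):ℝ) * r ^ (m+1-1)) • ((1 / (2 * r)) • N)))).smulRight (G p)) p := by
    rw [hfun]; exact hFd
  set K : ℝ := -(((σ * r^(m+1))^2)⁻¹) *
      (σ * (((m+1:ℕ):ℝ) * r^(m+1-1) * (1/(2*r) * 2))) with hK
  have hval : ∀ s : Fin (m+1), fderiv ℝ (fun q => μ (E q) a) p (Pi.single s 1)
      = (K * p s) • G p + (σ * r^(m+1))⁻¹ • G (Pi.single s 1) := by
    intro s
    rw [hFE.fderiv]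
    simp only [ContinuousLinearMap.add_apply, ContinuousLinearMap.smul_apply,
      ContinuousLinearMap.smulRight_apply, hNdef, hP,
      ContinuousLinearMap.sum_apply, ContinuousLinearMap.proj_apply,
      Pi.single_apply, ← hrdef]
    simp [Finset.sum_ite_eq', hK]
    module
  -- algebraic identities
  have hμfirst : ∀ (x : A) (c : ℝ) (y b : A), μ (c • x - y) b = c • μ x b - μ y b := by
    intro x c y b; simp [map_sub, map_smul]
  set Y : A := ∑ t ∈ S, p t • v t with hY
  have hμY : ∀ b : A, μ Y b = ∑ t ∈ S, p t • μ (v t) b := by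
    intro b; simp [hY, map_sum, map_smul, ContinuousLinearMap.sum_apply]
  have hGp : G p = p 0 • a - μ Y a := by rw [hGapp p, hμY]
  have hYY : μ Y Y = (-(∑ t ∈ S, p t ^ 2)) • e := by
    have expand : μ Y Y = ∑ s ∈ S, ∑ t ∈ S, (p s * p t) • μ (v s) (v t) := by
      rw [hμY Y]
      refine Finset.sum_congr rfl fun s hs => ?_
      rw [show (μ (v s)) Y = ∑ t ∈ S, p t • μ (v s) (v t) from by
        simp [hY, map_sum, map_smul]]
      rw [Finset.smul_sum]
      exact Finset.sum_congr rfl fun t _ => by rw [smul_smul]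
    rw [expand, sum_sum_antisymm' S _ (fun s hs t ht hst => by
      rw [hvanti s t ((hmemS s).1 hs) ((hmemS t).1 ht) hst, smul_neg, mul_comm])]
    calc ∑ s ∈ S, (p s * p s) • μ (v s) (v s)
        = ∑ s ∈ S, -((p s ^ 2) • e) := by
          refine Finset.sum_congr rfl fun s hs => ?_
          rw [hvsq s ((hmemS s).1 hs), smul_neg, sq]
      _ = (-(∑ t ∈ S, p t ^ 2)) • e := by
          rw [neg_smul, Finset.sum_smul]
          exact Finset.sum_neg_distrib _
  have hYYa : μ Y (μ Y a) = (-(∑ t ∈ S, p t ^ 2)) • a := by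
    rw [← hLA Y a, hYY, map_smul, ContinuousLinearMap.smul_apply, (he a).1]
  -- (A)
  have hA : ∑ s, p s • μ (v s) (G p) = (∑ t, p t ^ 2) • a := by
    have h1 : ∑ s ∈ S, p s • μ (v s) (G p) = p 0 • μ Y a - μ Y (μ Y a) := by
      calc ∑ s ∈ S, p s • μ (v s) (G p)
          = ∑ s ∈ S, (p 0 • (p s • μ (v s) a) - p s • μ (v s) (μ Y a)) := by
            refine Finset.sum_congr rfl fun s hs => ?_
            rw [hGp, map_sub, map_smul, smul_sub, smul_comm (p s) (p 0)]
        _ = p 0 • μ Y a - μ Y (μ Y a) := by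
            rw [Finset.sum_sub_distrib, ← Finset.smul_sum, ← hμY a, ← hμY (μ Y a)]
    calc ∑ s, p s • μ (v s) (G p)
        = ∑ s ∈ S, p s • μ (v s) (G p) + p 0 • μ (v 0) (G p) :=
          Finset.sum_eq_sum_sdiff_singleton_add (Finset.mem_univ 0) _
      _ = (p 0 • μ Y a - μ Y (μ Y a)) + p 0 • (p 0 • a - μ Y a) := by
          rw [h1, hv0, (he (G p)).1, hGp]
      _ = (∑ t ∈ S, p t ^ 2 + p 0 ^ 2) • a := by
          rw [hYYa]; module
      _ = (∑ t, p t ^ 2) • a := by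
          rw [← Finset.sum_eq_sum_sdiff_singleton_add (Finset.mem_univ 0) (fun t => p t ^ 2)]
  -- (B)
  have hB : ∑ s, μ (v s) (G (Pi.single s 1)) = ((m+1 : ℕ) : ℝ) • a := by
    have hterm : ∀ s : Fin (m+1), μ (v s) (G (Pi.single s 1)) = a := by
      intro s
      rw [hGapp]
      by_cases hs : s = 0
      · subst hs
        simp [Pi.single_apply, hS, hv0, (he a).1]
      · have hzero : (Pi.single s 1 : Fin (m+1) → ℝ) 0 = 0 := by
          simp [Pi.single_apply, Ne.symm hs]
        have hsum : ∑ t ∈ S, (Pi.single s 1 : Fin (m+1) → ℝ) t • μ (v t) a = μ (v s) a := by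
          simp only [Pi.single_apply, ite_smul, one_smul, zero_smul]
          rw [Finset.sum_ite_eq' S s (fun t => μ (v t) a), if_pos ((hmemS s).2 hs)]
        rw [hzero, hsum, zero_smul, zero_sub, map_neg, ← hLA, hvsq s hs, map_neg,
          ContinuousLinearMap.neg_apply, (he a).1, neg_neg]
    rw [Finset.sum_congr rfl fun s _ => hterm s, Finset.sum_const, Finset.card_univ,
      Fintype.card_fin, Nat.cast_smul_eq_nsmul]
  -- final assembly
  have hker : K * (∑ t, p t ^ 2) + (σ * r^(m+1))⁻¹ * ((m+1:ℕ):ℝ) = 0 := by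
    rw [← hr2, hK]
    have hmm : m + 1 - 1 = m := rfl
    rw [hmm]
    have hrne : r ≠ 0 := hr.ne'
    have hσne : σ ≠ 0 := hσpos.ne'
    field_simp
    ring
  calc ∑ s, μ (v s) (fderiv ℝ (fun q => μ (E q) a) p (Pi.single s 1))
      = ∑ s, ((K * p s) • μ (v s) (G p)
          + (σ * r^(m+1))⁻¹ • μ (v s) (G (Pi.single s 1))) := by
        refine Finset.sum_congr rfl fun s _ => ?_
        rw [hval s, map_add, map_smul, map_smul]
    _ = K • (∑ s, p s • μ (v s) (G p))
          + (σ * r^(m+1))⁻¹ • (∑ s, μ (v s) (G (Pi.single s 1))) := by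
        rw [Finset.sum_add_distrib, Finset.smul_sum, Finset.smul_sum]
        congr 1
        exact Finset.sum_congr rfl fun s _ => by rw [mul_smul]
    _ = (K * (∑ t, p t ^ 2) + (σ * r^(m+1))⁻¹ * ((m+1:ℕ):ℝ)) • a := by
        rw [hA, hB, smul_smul, smul_smul, add_smul]
    _ = 0 := by rw [hker, zero_smul]
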